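/- Let h > 0 be real and θ₁, θ₂ ∈ ℝ. Over ℂ, let A be the 4×4 matrix (1/h²)·[[4, −1, −1, 0], [−1, 4, 0, −1], [−1, 0, 4, −1], [0, −1, −1, 4]], let Φ = diag(1, e^{iθ₁}, e^{iθ₂}, e^{i(θ₁+θ₂)}), let W = (1/4)·I₄, and let V be the 4×1 column vector of ones. Then A is invertible with A⁻¹ = h²·[[7/24, 1/12, 1/12, 1/24], [1/12, 7/24, 1/24, 1/12], [1/12, 1/24, 7/24, 1/12], [1/24, 1/12, 1/12, 7/24]], and the 1×1 matrix Vᵀ W Φ* A⁻¹ Φ V (where Φ* is the conjugate transpose of Φ) has its unique entry equal to (h²/24)(7 + 2(cos θ₁ + cos θ₂) + cos θ₁ cos θ₂). -/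

import Mathlib

open Matrix Complex

noncomputable def A18 (h : ℝ) : Matrix (Fin 4) (Fin 4) ℂ :=
  (1 / (h ^ 2 : ℂ)) • !![4, -1, -1, 0; -1, 4, 0, -1; -1, 0, 4, -1; 0, -1, -1, 4]

noncomputable def Phi18 (θ₁ θ₂ : ℝ) : Matrix (Fin 4) (Fin 4) ℂ :=
  diagonal ![1, exp (I * θ₁), exp (I * θ₂), exp (I * (θ₁ + θ₂))]

noncomputable def W18 : Matrix (Fin 4) (Fin 4) ℂ := (1 / 4 : ℂ) • 1

def V18 : Matrix (Fin 4) (Fin 1) ℂ := fun _ _ => 1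

set_option maxHeartbeats 1000000 in
set_option maxRecDepth 4000 in
theorem stmt_18 (h θ₁ θ₂ : ℝ) (hh : 0 < h) :
    IsUnit (A18 h) ∧
    (A18 h)⁻¹ = (h ^ 2 : ℂ) •
      !![7/24, 1/12, 1/12, 1/24;
         1/12, 7/24, 1/24, 1/12;
         1/12, 1/24, 7/24, 1/12;
         1/24, 1/12, 1/12, 7/24] ∧
    (V18ᵀ * W18 * (Phi18 θ₁ θ₂)ᴴ * (A18 h)⁻¹ * Phi18 θ₁ θ₂ * V18) 0 0 =
      ((h ^ 2 : ℂ) / 24) * (7 + 2 * ((Real.cos θ₁ : ℂ) + (Real.cos θ₂ : ℂ)) +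
        (Real.cos θ₁ : ℂ) * (Real.cos θ₂ : ℂ)) := by
  have hne : (h ^ 2 : ℂ) ≠ 0 := by
    exact_mod_cast pow_ne_zero 2 (Complex.ofReal_ne_zero.mpr hh.ne')
  set B : Matrix (Fin 4) (Fin 4) ℂ := (h ^ 2 : ℂ) •
      !![7/24, 1/12, 1/12, 1/24;
         1/12, 7/24, 1/24, 1/12;
         1/12, 1/24, 7/24, 1/12;
         1/24, 1/12, 1/12, 7/24] with hB
  have hmul : A18 h * B = 1 := by
    rw [A18, hB, Matrix.smul_mul, Matrix.mul_smul, smul_smul,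
      one_div, inv_mul_cancel₀ hne, one_smul]
    ext i j
    fin_cases i <;> fin_cases j <;>
      norm_num [Matrix.mul_apply, Fin.sum_univ_four, Matrix.one_apply, Fin.ext_iff] <;>
      simp [Matrix.vecHead, Matrix.vecTail] <;> norm_num
  have hU : IsUnit (A18 h) := ⟨⟨A18 h, B, hmul, mul_eq_one_comm.mp hmul⟩, rfl⟩
  have hinv : (A18 h)⁻¹ = B := inv_eq_right_inv hmul
  refine ⟨hU, hinv, ?_⟩
  rw [hinv]
  have e1 : exp (I * θ₁) = (Real.cos θ₁ : ℂ) + (Real.sin θ₁ : ℂ) * I := by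
    rw [mul_comm, Complex.exp_mul_I]
    push_cast [Complex.ofReal_cos, Complex.ofReal_sin]; ring
  have e2 : exp (I * θ₂) = (Real.cos θ₂ : ℂ) + (Real.sin θ₂ : ℂ) * I := by
    rw [mul_comm, Complex.exp_mul_I]
    push_cast [Complex.ofReal_cos, Complex.ofReal_sin]; ring
  have e3 : exp (I * (θ₁ + θ₂)) = exp (I * θ₁) * exp (I * θ₂) := by
    rw [← Complex.exp_add]; ring_nf
  have hp1 : (Real.cos θ₁ : ℂ) ^ 2 + (Real.sin θ₁ : ℂ) ^ 2 = 1 := by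
    push_cast [← Complex.ofReal_pow, ← Complex.ofReal_add]
    exact_mod_cast Real.cos_sq_add_sin_sq θ₁
  have hp2 : (Real.cos θ₂ : ℂ) ^ 2 + (Real.sin θ₂ : ℂ) ^ 2 = 1 := by
    push_cast [← Complex.ofReal_pow, ← Complex.ofReal_add]
    exact_mod_cast Real.cos_sq_add_sin_sq θ₂
  have hp12 : ((Real.cos θ₁ : ℂ) ^ 2 + (Real.sin θ₁ : ℂ) ^ 2) *
      ((Real.cos θ₂ : ℂ) ^ 2 + (Real.sin θ₂ : ℂ) ^ 2) = 1 := by rw [hp1, hp2]; ring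
  simp only [V18, W18, Phi18, hB, Matrix.mul_apply, Fin.sum_univ_four,
    Matrix.conjTranspose_apply, Matrix.transpose_apply, Matrix.smul_apply, Matrix.one_apply,
    Matrix.diagonal_apply, e3, e1, e2, Matrix.cons_val_zero, Matrix.cons_val_one,
    Matrix.head_cons, Matrix.cons_val_fin_one, Matrix.cons_val', Matrix.empty_val',
    Matrix.head_fin_const, Matrix.of_apply, smul_eq_mul, map_add, _root_.map_mul, _root_.map_one,
    Complex.conj_ofReal, Complex.conj_I, Matrix.cons_val_two, Matrix.cons_val_three,
    Matrix.tail_cons, Matrix.head_fin_const]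
  simp only [Fin.reduceEq, if_true, if_false, ite_true, ite_false, star_zero, star_one,
    mul_zero, zero_mul, mul_one, one_mul, add_zero, zero_add, Complex.star_def, map_add,
    _root_.map_mul, Complex.conj_ofReal, Complex.conj_I]
  ring_nf
  have hI4 : (I : ℂ) ^ 4 = 1 := by
    rw [show (4:ℕ) = 2*2 from rfl, pow_mul, Complex.I_sq]; norm_num
  simp only [Complex.I_sq, hI4]
  linear_combination ((h:ℂ)^2/4) * ((7/24) * (hp1 + hp2 + hp12) +
    (1/6) * ((Real.cos θ₂ : ℂ) * hp1 + (Real.cos θ₁ : ℂ) * hp2))
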